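/- Let K be a self-similar compact set of module μ and ratio ρ, and define T_u := K^(u) \ K^(u+1) for u ≥ 0. Then the sets T_u are pairwise disjoint, T_{u+nμ} = T_u / ρ^n for all n ≥ 0, and K \ {0} = ⋃_{n≥0} (T_0 ∪ T_1 ∪ ⋯ ∪ T_{μ−1}) / ρ^n. -/

import Mathlib

open Ordinal Filter Topology Set

/-- The `n`-th derived set of `A ⊆ ℝ`. -/
noncomputable def iterDeriv (A : Set ℝ) (n : ℕ) : Set ℝ := (derivedSet (X := ℝ))^[n] A

/-- The ordinal `ω ^ ω`. -/
noncomputable def wOmega : Ordinal.{0} := Ordinal.omega0 ^ Ordinal.omega0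

/-- An enumeration of `K ⊆ ℝ` witnessing that `K`, with the reverse of the usual order,
is well-ordered with order type `ω ^ ω + 1`: its elements are exactly `e α` for
`α ≤ ω ^ ω`, and the enumeration is strictly order-reversing. `e α` is the element
written `K[α]`. -/
structure OrdEnum (K : Set ℝ) where
  e : Ordinal.{0} → ℝ
  mem : ∀ α ≤ wOmega, e α ∈ K
  surj : ∀ x ∈ K, ∃ α ≤ wOmega, e α = x
  anti : ∀ ⦃α β : Ordinal.{0}⦄, α ≤ wOmega → β ≤ wOmega → (α < β ↔ e β < e α)

/-- An enumeration of a set `S ⊆ ℝ` of reverse-order type `ω ^ ω` (indices `α < ω ^ ω`),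
strictly order-reversing; `e α` is the element written `S[α]`. -/
structure SubEnum (S : Set ℝ) where
  e : Ordinal.{0} → ℝ
  mem : ∀ α < wOmega, e α ∈ S
  surj : ∀ x ∈ S, ∃ α < wOmega, e α = x
  anti : ∀ ⦃α β : Ordinal.{0}⦄, α < wOmega → β < wOmega → (α < β ↔ e β < e α)

/-- A self-similar compact set of ratio `ρ > 1` and module `μ ≥ 1`:
a compact `K ⊆ [0, ∞)`, well-ordered by the reverse usual order with order
type `ω ^ ω + 1`, satisfying `ρ • K^(μ) = K`. -/
def SelfSimilar (K : Set ℝ) (ρ : ℝ) (μ : ℕ) : Prop :=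
  IsCompact K ∧ K ⊆ Set.Ici 0 ∧ 1 < ρ ∧ 1 ≤ μ ∧
    (fun x => ρ * x) '' iterDeriv K μ = K ∧ Nonempty (OrdEnum K)

lemma iterDeriv_succ' (A : Set ℝ) (n : ℕ) :
    iterDeriv A (n + 1) = derivedSet (iterDeriv A n) := Function.iterate_succ_apply' _ _ _

lemma image_derivedSet_mul (c : ℝ) (hc : c ≠ 0) (A : Set ℝ) :
    derivedSet ((fun x => c * x) '' A) = (fun x => c * x) '' derivedSet A := by
  apply subset_antisymm
  · intro x hx
    have h2 : (fun x => c⁻¹ * x) '' derivedSet ((fun x => c * x) '' A)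
        ⊆ derivedSet ((fun x => c⁻¹ * x) '' ((fun x => c * x) '' A)) :=
      Continuous.image_derivedSet (by continuity) (mul_right_injective₀ (inv_ne_zero hc))
    have h3 : (fun x => c⁻¹ * x) '' ((fun x => c * x) '' A) = A := by
      rw [Set.image_image]
      simp [inv_mul_cancel_left₀ hc]
    have : c⁻¹ * x ∈ derivedSet A := by
      rw [← h3]; exact h2 ⟨x, hx, rfl⟩
    exact ⟨c⁻¹ * x, this, by field_simp⟩
  · exact Continuous.image_derivedSet (by continuity) (mul_right_injective₀ hc)

lemma iterDeriv_image_mul (c : ℝ) (hc : c ≠ 0) (A : Set ℝ) (n : ℕ) :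
    iterDeriv ((fun x => c * x) '' A) n = (fun x => c * x) '' iterDeriv A n := by
  induction n with
  | zero => rfl
  | succ n ih => rw [iterDeriv_succ', ih, image_derivedSet_mul c hc, iterDeriv_succ']

lemma iterDeriv_isClosed (A : Set ℝ) (hA : IsClosed A) (n : ℕ) : IsClosed (iterDeriv A n) := by
  induction n with
  | zero => exact hA
  | succ n ih => rw [iterDeriv_succ']; exact isClosed_derivedSet _

lemma iterDeriv_anti (A : Set ℝ) (hA : IsClosed A) {m n : ℕ} (h : m ≤ n) :
    iterDeriv A n ⊆ iterDeriv A m := by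
  induction n with
  | zero => simp_all
  | succ n ih =>
    rcases Nat.lt_or_ge m (n+1) with h' | h'
    · have hs : iterDeriv A (n+1) ⊆ iterDeriv A n := by
        rw [iterDeriv_succ']
        exact (isClosed_iff_derivedSet_subset _).mp (iterDeriv_isClosed A hA n)
      exact hs.trans (ih (Nat.lt_succ_iff.mp h'))
    · have : m = n + 1 := le_antisymm h h'
      subst this
      exact subset_rfl

theorem selfSimilar_decomposition (K : Set ℝ) (ρ : ℝ) (μ : ℕ)
    (h : SelfSimilar K ρ μ) (T : ℕ → Set ℝ)
    (hT : ∀ u, T u = iterDeriv K u \ iterDeriv K (u + 1)) :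
    Pairwise (Function.onFun Disjoint T) ∧
    (∀ u n : ℕ, T (u + n * μ) = (fun x => x / ρ ^ n) '' T u) ∧
    K \ {0} = ⋃ n : ℕ, ⋃ u : ℕ, ⋃ _ : u < μ, (fun x => x / ρ ^ n) '' T u := by
  classical
  obtain ⟨hcomp, hIci, hρ, hμ, hself, -⟩ := h
  have hρ0 : ρ ≠ 0 := by positivity
  have hc : (ρ⁻¹ : ℝ) ≠ 0 := inv_ne_zero hρ0
  have hclosed : IsClosed K := hcomp.isClosed
  -- K^μ = ρ⁻¹ • K
  have hKμ : iterDeriv K μ = (fun x => ρ⁻¹ * x) '' K := by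
    have h1 := congrArg (Set.image fun x : ℝ => ρ⁻¹ * x) hself
    rw [Set.image_image] at h1
    simp only [inv_mul_cancel_left₀ hρ0] at h1
    rw [← h1, Set.image_id']
  -- step
  have step : ∀ m : ℕ, iterDeriv K (m + μ) = (fun x => ρ⁻¹ * x) '' iterDeriv K m := by
    intro m
    have : iterDeriv K (m + μ) = iterDeriv (iterDeriv K μ) m :=
      Function.iterate_add_apply _ m μ K
    rw [this, hKμ, iterDeriv_image_mul _ hc]
  have key : ∀ u n : ℕ, iterDeriv K (u + n * μ) = (fun x => ρ⁻¹ ^ n * x) '' iterDeriv K u := by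
    intro u n
    induction n with
    | zero => simp
    | succ n ih =>
      have he : u + (n + 1) * μ = (u + n * μ) + μ := by ring
      rw [he, step, ih, Set.image_image]
      congr 1
      funext x
      ring
  have hfun : ∀ n : ℕ, (fun x : ℝ => x / ρ ^ n) = fun x => ρ⁻¹ ^ n * x := by
    intro n
    funext x
    rw [div_eq_inv_mul, inv_pow]
  -- Part 2
  have part2 : ∀ u n : ℕ, T (u + n * μ) = (fun x => x / ρ ^ n) '' T u := by
    intro u n
    have hinj : Function.Injective (fun x : ℝ => ρ⁻¹ ^ n * x) :=
      mul_right_injective₀ (pow_ne_zero n hc)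
    have h1 : u + n * μ + 1 = (u + 1) + n * μ := by ring
    rw [hT, hT, hfun n, h1, key, key, ← Set.image_diff hinj]
  -- Part 1
  have part1 : Pairwise (Function.onFun Disjoint T) := by
    have main : ∀ i j : ℕ, i < j → Disjoint (T i) (T j) := by
      intro i j hij
      rw [Set.disjoint_left]
      intro x hxi hxj
      rw [hT] at hxi hxj
      exact hxi.2 (iterDeriv_anti K hclosed hij hxj.1)
    intro i j hij
    rcases lt_or_gt_of_ne hij with h' | h'
    · exact main i j h'
    · exact (main j i h').symm
  refine ⟨part1, part2, ?_⟩
  -- Part 3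
  have hzero : ∀ m : ℕ, (0 : ℝ) ∈ K → (0 : ℝ) ∈ iterDeriv K m := by
    intro m h0
    have hm : m ≤ (0 + m * μ) := by
      simp only [Nat.zero_add]
      exact Nat.le_mul_of_pos_right m hμ
    refine iterDeriv_anti K hclosed hm ?_
    rw [key 0 m]
    exact ⟨0, h0, by simp⟩
  ext x
  simp only [Set.mem_diff, Set.mem_singleton_iff, Set.mem_iUnion]
  constructor
  · rintro ⟨hxK, hx0⟩
    have hxpos : 0 < x := lt_of_le_of_ne (hIci hxK) (Ne.symm hx0)
    obtain ⟨M, hM⟩ := hcomp.bddAbove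
    have hex : ∃ m, x ∉ iterDeriv K m := by
      by_contra hcon
      push_neg at hcon
      obtain ⟨n, hn⟩ := pow_unbounded_of_one_lt (M / x) hρ
      have := hcon (0 + n * μ)
      rw [key 0 n] at this
      obtain ⟨y, hyK, hyx⟩ := this
      have hy : y = ρ ^ n * x := by
        have : x = ρ⁻¹ ^ n * y := hyx.symm
        rw [this, ← mul_assoc, ← mul_pow, mul_inv_cancel₀ hρ0, one_pow, one_mul]
      have hle : y ≤ M := hM hyK
      have : M < ρ ^ n * x := by
        rw [div_lt_iff₀ hxpos] at hn
        linarith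
      rw [hy] at hle
      linarith
    have hm : x ∉ iterDeriv K (Nat.find hex) := Nat.find_spec hex
    have hm0 : Nat.find hex ≠ 0 := by
      intro h0
      rw [h0] at hm
      exact hm hxK
    obtain ⟨m', hm'⟩ := Nat.exists_eq_succ_of_ne_zero hm0
    rw [hm'] at hm
    have hxm' : x ∈ iterDeriv K m' := by
      by_contra hcon
      exact Nat.find_min hex (by omega) hcon
    have hxT : x ∈ T m' := by
      rw [hT]
      exact ⟨hxm', hm⟩
    have hμpos : 0 < μ := hμ
    refine ⟨m' / μ, m' % μ, Nat.mod_lt _ hμpos, ?_⟩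
    rw [← part2]
    have : m' % μ + m' / μ * μ = m' := Nat.mod_add_div' m' μ
    rw [this]
    exact hxT
  · rintro ⟨n, u, hu, hx⟩
    rw [← part2] at hx
    rw [hT] at hx
    have hxK : x ∈ K := iterDeriv_anti K hclosed (Nat.zero_le _) hx.1
    refine ⟨hxK, ?_⟩
    intro h0
    subst h0
    exact hx.2 (hzero _ hxK)
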